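/- arXiv:1303.3053 — 4 statements merged into one kernel-verified Lean document; each statement's English description precedes it below -/
import Mathlib

section
/- Let A be a finite nonempty set of integers with |A| = k. If |A + 2∗A| = 3k − 2, then A is an arithmetic progression. -/
/-- The chain function enumerating the canonical 3k-2 elements of A + 2*A. -/
def chainFun (a : ℕ → ℤ) (n : ℕ) : ℤ :=
  if n % 3 = 0 then a (n / 3) + 2 * a (n / 3)
  else if n % 3 = 1 then a (n / 3 + 1) + 2 * a (n / 3)
  else a (n / 3) + 2 * a (n / 3 + 1)

lemma chainFun_eval0 (a : ℕ → ℤ) (q : ℕ) : chainFun a (3 * q) = a q + 2 * a q := by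
  have h1 : (3 * q) % 3 = 0 := by omega
  have h2 : (3 * q) / 3 = q := by omega
  simp [chainFun, h1, h2]

lemma chainFun_eval1 (a : ℕ → ℤ) (q : ℕ) : chainFun a (3 * q + 1) = a (q + 1) + 2 * a q := by
  have h1 : (3 * q + 1) % 3 = 1 := by omega
  have h2 : (3 * q + 1) / 3 = q := by omega
  simp [chainFun, h1, h2]

lemma chainFun_eval2 (a : ℕ → ℤ) (q : ℕ) : chainFun a (3 * q + 2) = a q + 2 * a (q + 1) := by
  have h1 : (3 * q + 2) % 3 = 2 := by omega
  have h2 : (3 * q + 2) / 3 = q := by omega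
  simp [chainFun, h1, h2]

theorem stmt2 (A : Finset ℤ) (hA : A.Nonempty) (k : ℕ) (hk : A.card = k)
    (h : ((Finset.image₂ (fun a b => a + 2 * b) A A).card : ℤ) = 3 * k - 2) :
    ∃ u d : ℤ, A = (Finset.range k).image (fun i : ℕ => u + (i : ℤ) * d) := by
  have hk1 : 1 ≤ k := by
    rw [← hk]
    exact Finset.card_pos.mpr hA
  -- the sorted enumeration of A
  set a : ℕ → ℤ := fun i => if h : i < k then A.orderEmbOfFin hk ⟨i, h⟩ else 0 with ha_def
  have ha_mem : ∀ i, i < k → a i ∈ A := by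
    intro i hi
    simp only [ha_def, dif_pos hi]
    exact A.orderEmbOfFin_mem hk ⟨i, hi⟩
  have ha_mono : ∀ i j, i < j → j < k → a i < a j := by
    intro i j hij hj
    have hi : i < k := lt_trans hij hj
    simp only [ha_def, dif_pos hi, dif_pos hj]
    exact (A.orderEmbOfFin hk).strictMono (by exact hij)
  have ha_surj : ∀ x ∈ A, ∃ i, i < k ∧ a i = x := by
    intro x hx
    have : x ∈ Set.range (A.orderEmbOfFin hk) := by
      rw [Finset.range_orderEmbOfFin]
      exact hx
    obtain ⟨⟨i, hi⟩, hix⟩ := this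
    exact ⟨i, hi, by simp [ha_def, dif_pos hi, hix]⟩
  set g : ℕ → ℤ := chainFun a with hg_def
  set S : Finset ℤ := Finset.image₂ (fun a b => a + 2 * b) A A with hS_def
  -- step lemma
  have hg_step : ∀ n, n + 1 < 3 * k - 2 → g n < g (n + 1) := by
    intro n hn
    have h3 : n % 3 = 0 ∨ n % 3 = 1 ∨ n % 3 = 2 := by omega
    rcases h3 with h3 | h3 | h3
    · obtain ⟨q, rfl⟩ : ∃ q, n = 3 * q := ⟨n / 3, by omega⟩
      rw [hg_def, chainFun_eval0, show 3 * q + 1 = 3 * q + 1 from rfl, chainFun_eval1]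
      have := ha_mono q (q + 1) (by omega) (by omega)
      linarith
    · obtain ⟨q, rfl⟩ : ∃ q, n = 3 * q + 1 := ⟨n / 3, by omega⟩
      rw [hg_def, chainFun_eval1, show 3 * q + 1 + 1 = 3 * q + 2 from rfl, chainFun_eval2]
      have := ha_mono q (q + 1) (by omega) (by omega)
      linarith
    · obtain ⟨q, rfl⟩ : ∃ q, n = 3 * q + 2 := ⟨n / 3, by omega⟩
      rw [hg_def, chainFun_eval2, show 3 * q + 2 + 1 = 3 * (q + 1) from rfl, chainFun_eval0]
      have := ha_mono q (q + 1) (by omega) (by omega)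
      linarith
  have hg_mono : ∀ n, ∀ m, m < n → n < 3 * k - 2 → g m < g n := by
    intro n
    induction n with
    | zero => intro m hm _; omega
    | succ p ih =>
      intro m hm hp
      have hstep := hg_step p (by omega)
      rcases Nat.lt_succ_iff_lt_or_eq.mp hm with h' | h'
      · exact lt_trans (ih m h' (by omega)) hstep
      · subst h'; exact hstep
  have hg_memS : ∀ n, n < 3 * k - 2 → g n ∈ S := by
    intro n hn
    have h3 : n % 3 = 0 ∨ n % 3 = 1 ∨ n % 3 = 2 := by omega
    rcases h3 with h3 | h3 | h3
    · obtain ⟨q, rfl⟩ : ∃ q, n = 3 * q := ⟨n / 3, by omega⟩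
      rw [hg_def, chainFun_eval0]
      exact Finset.mem_image₂_of_mem (ha_mem q (by omega)) (ha_mem q (by omega))
    · obtain ⟨q, rfl⟩ : ∃ q, n = 3 * q + 1 := ⟨n / 3, by omega⟩
      rw [hg_def, chainFun_eval1]
      exact Finset.mem_image₂_of_mem (ha_mem (q + 1) (by omega)) (ha_mem q (by omega))
    · obtain ⟨q, rfl⟩ : ∃ q, n = 3 * q + 2 := ⟨n / 3, by omega⟩
      rw [hg_def, chainFun_eval2]
      exact Finset.mem_image₂_of_mem (ha_mem q (by omega)) (ha_mem (q + 1) (by omega))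
  have hScard : S.card = 3 * k - 2 := by
    omega
  set C : Finset ℤ := (Finset.range (3 * k - 2)).image g with hC_def
  have hC_card : C.card = 3 * k - 2 := by
    rw [hC_def, Finset.card_image_of_injOn, Finset.card_range]
    intro m hm n hn hmn
    simp only [Finset.coe_range, Set.mem_Iio] at hm hn
    rcases lt_trichotomy m n with h' | h' | h'
    · exact absurd hmn (ne_of_lt (hg_mono n m h' hn))
    · exact h'
    · exact absurd hmn.symm (ne_of_lt (hg_mono m n h' hm))
  have hCS : C = S := by
    apply Finset.eq_of_subset_of_card_le
    · intro x hx
      rw [hC_def] at hx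
      obtain ⟨n, hn, rfl⟩ := Finset.mem_image.mp hx
      exact hg_memS n (Finset.mem_range.mp hn)
    · rw [hC_card, hScard]
  have hmemC : ∀ x ∈ S, ∃ j, j < 3 * k - 2 ∧ g j = x := by
    intro x hx
    rw [← hCS, hC_def] at hx
    obtain ⟨j, hj, hg⟩ := Finset.mem_image.mp hx
    exact ⟨j, Finset.mem_range.mp hj, hg⟩
  -- locate an element of S between two chain points
  have hlocate : ∀ x ∈ S, ∀ m n : ℕ, m < 3 * k - 2 → n < 3 * k - 2 → g m < x → x < g n →
      ∃ j, m < j ∧ j < n ∧ g j = x := by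
    intro x hx m n hm hn hmx hxn
    obtain ⟨j, hj, rfl⟩ := hmemC x hx
    refine ⟨j, ?_, ?_, rfl⟩
    · by_contra hc
      push_neg at hc
      rcases eq_or_lt_of_le hc with h' | h'
      · subst h'; exact lt_irrefl _ hmx
      · exact absurd (hg_mono m j h' hm) (not_lt.mpr (le_of_lt hmx))
    · by_contra hc
      push_neg at hc
      rcases eq_or_lt_of_le hc with h' | h'
      · rw [h'] at hxn; exact lt_irrefl _ hxn
      · exact absurd (hg_mono j n h' hj) (not_lt.mpr (le_of_lt hxn))
  -- key gap lemma
  have hgap : ∀ q, q + 2 < k → a (q + 2) - a (q + 1) = a (q + 1) - a q := by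
    intro q hq
    have hq1 : a q < a (q + 1) := ha_mono q (q + 1) (by omega) (by omega)
    have hq2 : a (q + 1) < a (q + 2) := ha_mono (q + 1) (q + 2) (by omega) hq
    -- first element: a(q+2) + 2 a(q)
    have hx : a (q + 2) + 2 * a q ∈ S :=
      Finset.mem_image₂_of_mem (ha_mem (q + 2) hq) (ha_mem q (by omega))
    have hb1 : g (3 * q + 1) < a (q + 2) + 2 * a q := by
      rw [hg_def, chainFun_eval1]; linarith
    have hb2 : a (q + 2) + 2 * a q < g (3 * (q + 1) + 1) := by
      rw [hg_def, chainFun_eval1]; linarith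
    obtain ⟨j, hj1, hj2, hj3⟩ := hlocate _ hx (3 * q + 1) (3 * (q + 1) + 1) (by omega) (by omega) hb1 hb2
    have hjcase : j = 3 * q + 2 ∨ j = 3 * (q + 1) := by omega
    -- second element: a(q) + 2 a(q+2)
    have hy : a q + 2 * a (q + 2) ∈ S :=
      Finset.mem_image₂_of_mem (ha_mem q (by omega)) (ha_mem (q + 2) hq)
    have hc1 : g (3 * q + 2) < a q + 2 * a (q + 2) := by
      rw [hg_def, chainFun_eval2]; linarith
    have hc2 : a q + 2 * a (q + 2) < g (3 * (q + 1) + 2) := by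
      rw [hg_def, chainFun_eval2]; linarith
    obtain ⟨j', hj'1, hj'2, hj'3⟩ := hlocate _ hy (3 * q + 2) (3 * (q + 1) + 2) (by omega) (by omega) hc1 hc2
    have hj'case : j' = 3 * (q + 1) ∨ j' = 3 * (q + 1) + 1 := by omega
    rcases hjcase with rfl | rfl
    · rw [hg_def, chainFun_eval2] at hj3
      linarith
    · rw [hg_def, chainFun_eval0] at hj3
      rcases hj'case with rfl | rfl
      · rw [hg_def, chainFun_eval0] at hj'3
        linarith
      · rw [hg_def, chainFun_eval1] at hj'3
        linarith
  -- conclude: arithmetic progression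
  refine ⟨a 0, a 1 - a 0, ?_⟩
  have hd : ∀ i, i + 1 < k → a (i + 1) - a i = a 1 - a 0 := by
    intro i
    induction i with
    | zero => intro _; rfl
    | succ p ih =>
      intro hp
      rw [hgap p (by omega)]
      exact ih (by omega)
  have hval : ∀ i, i < k → a i = a 0 + (i : ℤ) * (a 1 - a 0) := by
    intro i
    induction i with
    | zero => intro _; simp
    | succ p ih =>
      intro hp
      have h1 := hd p (by omega)
      have h2 := ih (by omega)
      push_cast
      linarith
  ext x
  simp only [Finset.mem_image, Finset.mem_range]
  constructor
  · intro hx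
    obtain ⟨i, hi, rfl⟩ := ha_surj x hx
    exact ⟨i, hi, (hval i hi).symm⟩
  · rintro ⟨i, hi, rfl⟩
    rw [← hval i hi]
    exact ha_mem i hi
end

section
/- If S = b·a^A is a finite nonempty subset of BS(1,2), where A ⊆ ℤ is finite, then |S²| ≥ 3|S| − 2, with equality if and only if A is an arithmetic progression. -/
open Pointwise

def BSRel (n : ℤ) : Set (FreeGroup Bool) :=
  {FreeGroup.of true * FreeGroup.of false * (FreeGroup.of false * FreeGroup.of true ^ n)⁻¹}

/-- The Baumslag–Solitar group `BS(1,n) = ⟨a, b ∣ a b = b aⁿ⟩`. -/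
abbrev BS (n : ℤ) : Type := PresentedGroup (BSRel n)

noncomputable instance (n : ℤ) : DecidableEq (BS n) := Classical.decEq _

/-- The generator `a` of `BS(1,n)`. -/
def bsa (n : ℤ) : BS n := PresentedGroup.of true

/-- The generator `b` of `BS(1,n)`. -/
def bsb (n : ℤ) : BS n := PresentedGroup.of false


noncomputable def bsf : Bool → Equiv.Perm ℚ
  | true => Equiv.addRight 1
  | false => Equiv.mulLeft₀ (2⁻¹ : ℚ) (by norm_num)

lemma bsf_rel : ∀ r ∈ BSRel 2, FreeGroup.lift bsf r = 1 := by
  intro r hr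
  simp only [BSRel, Set.mem_singleton_iff] at hr
  subst hr
  simp only [map_mul, map_inv, FreeGroup.lift_apply_of, map_zpow]
  rw [mul_inv_eq_one]
  ext t
  simp [bsf, Equiv.Perm.mul_apply, zpow_two, Equiv.mulLeft₀_apply, Equiv.coe_addRight]
  ring

noncomputable def bsφ : BS 2 →* Equiv.Perm ℚ := PresentedGroup.toGroup bsf_rel

lemma bsφ_a_zpow (x : ℤ) : bsφ (bsa 2 ^ x) = Equiv.addRight (x : ℚ) := by
  rw [map_zpow, bsφ, bsa, PresentedGroup.toGroup.of]
  show (Equiv.addRight (1:ℚ)) ^ x = _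
  have hz : ∀ n : ℤ, (Equiv.addRight (1:ℚ)) ^ n = Equiv.addRight (n • (1:ℚ)) := by
    intro n; simp only [zsmul_eq_mul, mul_one]
    induction n using Int.induction_on with
    | zero => ext t; simp
    | succ n ih => rw [zpow_add_one, ih]; ext t; simp [Equiv.Perm.mul_apply]; ring
    | pred n ih => rw [zpow_sub_one, ih]; ext t; simp [Equiv.Perm.inv_def]; ring
  rw [hz]
  norm_num

lemma bsφ_b : bsφ (bsb 2) = Equiv.mulLeft₀ (2⁻¹ : ℚ) (by norm_num) := by
  rw [bsφ, bsb, PresentedGroup.toGroup.of]; rfl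

lemma bs_eval (x : ℤ) : bsφ (bsb 2 * bsa 2 ^ x) 0 = x / 2 := by
  rw [map_mul, bsφ_a_zpow, bsφ_b, Equiv.Perm.mul_apply]
  simp [Equiv.mulLeft₀_apply, Equiv.coe_addRight]
  ring

lemma bs_rel : bsa 2 * bsb 2 = bsb 2 * bsa 2 ^ (2:ℤ) := by
  have h : ((QuotientGroup.mk (FreeGroup.of true * FreeGroup.of false *
      (FreeGroup.of false * FreeGroup.of true ^ (2:ℤ))⁻¹)) : BS 2) = 1 := by
    rw [QuotientGroup.eq_one_iff]
    exact Subgroup.subset_normalClosure rfl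
  have h2 : ((QuotientGroup.mk' (Subgroup.normalClosure (BSRel 2)))
      (FreeGroup.of true * FreeGroup.of false *
      (FreeGroup.of false * FreeGroup.of true ^ (2:ℤ))⁻¹) : BS 2) = 1 := h
  rw [map_mul, map_mul, map_inv, map_mul, map_zpow, mul_inv_eq_one] at h2
  exact h2

lemma bs_swap (x : ℤ) : bsa 2 ^ x * bsb 2 = bsb 2 * bsa 2 ^ (2*x) := by
  have hconj : bsa 2 = bsb 2 * bsa 2 ^ (2:ℤ) * (bsb 2)⁻¹ := by
    rw [← bs_rel]; group
  have : bsa 2 ^ x = bsb 2 * bsa 2 ^ (2*x) * (bsb 2)⁻¹ := by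
    calc bsa 2 ^ x = (bsb 2 * bsa 2 ^ (2:ℤ) * (bsb 2)⁻¹) ^ x := by rw [← hconj]
    _ = bsb 2 * (bsa 2 ^ (2:ℤ)) ^ x * (bsb 2)⁻¹ := conj_zpow
    _ = bsb 2 * bsa 2 ^ (2*x) * (bsb 2)⁻¹ := by rw [← zpow_mul]
  rw [this]
  group

lemma prod_formula (x y : ℤ) :
    (bsb 2 * bsa 2 ^ x) * (bsb 2 * bsa 2 ^ y) = bsb 2 * bsb 2 * bsa 2 ^ (2*x+y) := by
  calc (bsb 2 * bsa 2 ^ x) * (bsb 2 * bsa 2 ^ y)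
      = bsb 2 * (bsa 2 ^ x * bsb 2) * bsa 2 ^ y := by group
    _ = bsb 2 * (bsb 2 * bsa 2 ^ (2*x)) * bsa 2 ^ y := by rw [bs_swap]
    _ = bsb 2 * bsb 2 * bsa 2 ^ (2*x+y) := by rw [zpow_add]; group

lemma bs_eval2 (m : ℤ) : bsφ (bsb 2 * bsb 2 * bsa 2 ^ m) 0 = m / 4 := by
  rw [map_mul, map_mul, bsφ_a_zpow, bsφ_b, Equiv.Perm.mul_apply, Equiv.Perm.mul_apply]
  simp [Equiv.mulLeft₀_apply, Equiv.coe_addRight]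
  ring


open Finset

lemma key (A : Finset ℤ) (hA : A.Nonempty) :
    3 * (A.card : ℤ) - 2 ≤ ((Finset.image₂ (fun x y => 2*x + y) A A).card : ℤ) ∧
    (((Finset.image₂ (fun x y => 2*x + y) A A).card : ℤ) = 3 * A.card - 2 ↔
      ∃ u d : ℤ, A = (Finset.range A.card).image (fun i : ℕ => u + (i:ℤ) * d)) := by
  set T := Finset.image₂ (fun x y => 2*x + y) A A with hT
  set k := A.card with hk
  have hk1 : 1 ≤ k := hA.card_pos
  set a : ℕ → ℤ := fun i => A.orderEmbOfFin hk.symm ⟨min i (k-1), by omega⟩ with ha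
  have hmem : ∀ i, a i ∈ A := fun i => A.orderEmbOfFin_mem hk.symm _
  have hmono : ∀ {i j : ℕ}, i < j → j < k → a i < a j := by
    intro i j hij hj
    exact (A.orderEmbOfFin hk.symm).strictMono (by simp [Fin.lt_def]; omega)
  have hle : ∀ {i j : ℕ}, i ≤ j → j < k → a i ≤ a j := by
    intro i j hij hj
    rcases eq_or_lt_of_le hij with rfl | h
    · exact le_refl _
    · exact (hmono h hj).le
  have hsurj : ∀ v ∈ A, ∃ i, i < k ∧ a i = v := by
    intro v hv
    have : v ∈ Set.range (A.orderEmbOfFin hk.symm) := by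
      rw [Finset.range_orderEmbOfFin]; exact hv
    obtain ⟨⟨i, hi⟩, hiv⟩ := this
    refine ⟨i, hi, ?_⟩
    have hfin : (⟨min i (k-1), by omega⟩ : Fin k) = ⟨i, hi⟩ := by
      ext; simp; omega
    rw [ha]; simp only [hfin]; exact hiv
  set X := (range k).image (fun i => 3 * a i) with hX
  set Y := (range (k-1)).image (fun i => 2 * a i + a (i+1)) with hY
  set Z := (range (k-1)).image (fun i => a i + 2 * a (i+1)) with hZ
  have hXcard : X.card = k := by
    rw [hX, card_image_of_injOn, card_range]
    intro i hi j hj h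
    simp only [coe_range, Set.mem_Iio] at hi hj
    beta_reduce at h
    rcases lt_trichotomy i j with h' | h' | h'
    · have := hmono h' hj; omega
    · exact h'
    · have := hmono h' hi; omega
  have hYcard : Y.card = k - 1 := by
    rw [hY, card_image_of_injOn, card_range]
    intro i hi j hj h
    simp only [coe_range, Set.mem_Iio] at hi hj
    beta_reduce at h
    rcases lt_trichotomy i j with h' | h' | h'
    · have h1 := hmono h' (by omega : j < k)
      have h2 := hmono (by omega : i+1 < j+1) (by omega : j+1 < k)
      omega
    · exact h'
    · have h1 := hmono h' (by omega : i < k)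
      have h2 := hmono (by omega : j+1 < i+1) (by omega : i+1 < k)
      omega
  have hZcard : Z.card = k - 1 := by
    rw [hZ, card_image_of_injOn, card_range]
    intro i hi j hj h
    simp only [coe_range, Set.mem_Iio] at hi hj
    beta_reduce at h
    rcases lt_trichotomy i j with h' | h' | h'
    · have h1 := hmono h' (by omega : j < k)
      have h2 := hmono (by omega : i+1 < j+1) (by omega : j+1 < k)
      omega
    · exact h'
    · have h1 := hmono h' (by omega : i < k)
      have h2 := hmono (by omega : j+1 < i+1) (by omega : i+1 < k)
      omega
  have hXY : Disjoint X Y := by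
    rw [Finset.disjoint_left]
    intro x hx hy
    rw [hX, mem_image] at hx
    rw [hY, mem_image] at hy
    obtain ⟨i, hi, rfl⟩ := hx
    obtain ⟨j, hj, hxy⟩ := hy
    rw [mem_range] at hi hj
    rcases le_or_gt i j with h | h
    · have h1 := hle h (by omega : j < k)
      have h2 := hmono (by omega : j < j+1) (by omega : j+1 < k)
      omega
    · have h1 := hle (by omega : j+1 ≤ i) hi
      have h2 := hmono (by omega : j < j+1) (by omega : j+1 < k)
      omega
  have hXZ : Disjoint X Z := by
    rw [Finset.disjoint_left]
    intro x hx hy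
    rw [hX, mem_image] at hx
    rw [hZ, mem_image] at hy
    obtain ⟨i, hi, rfl⟩ := hx
    obtain ⟨j, hj, hxy⟩ := hy
    rw [mem_range] at hi hj
    rcases le_or_gt i j with h | h
    · have h1 := hle h (by omega : j < k)
      have h2 := hmono (by omega : j < j+1) (by omega : j+1 < k)
      omega
    · have h1 := hle (by omega : j+1 ≤ i) hi
      have h2 := hmono (by omega : j < j+1) (by omega : j+1 < k)
      omega
  have hYZ : Disjoint Y Z := by
    rw [Finset.disjoint_left]
    intro x hx hy
    rw [hY, mem_image] at hx
    rw [hZ, mem_image] at hy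
    obtain ⟨i, hi, rfl⟩ := hx
    obtain ⟨j, hj, hxy⟩ := hy
    rw [mem_range] at hi hj
    rcases le_or_gt i j with h | h
    · have h1 := hle h (by omega : j < k)
      have h2 := hle (by omega : i+1 ≤ j+1) (by omega : j+1 < k)
      have h3 := hmono (by omega : j < j+1) (by omega : j+1 < k)
      omega
    · have h1 := hle (by omega : j+1 ≤ i) (by omega : i < k)
      have h2 := hmono (by omega : j+1 < i+1) (by omega : i+1 < k)
      have h3 := hmono (by omega : j < j+1) (by omega : j+1 < k)
      omega
  have hCcard : (X ∪ Y ∪ Z).card = 3 * k - 2 := by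
    rw [card_union_of_disjoint (by
      rw [Finset.disjoint_union_left]; exact ⟨hXZ, hYZ⟩),
      card_union_of_disjoint hXY, hXcard, hYcard, hZcard]
    omega
  have hCsub : X ∪ Y ∪ Z ⊆ T := by
    intro x hx
    rw [hT, Finset.mem_image₂]
    rcases Finset.mem_union.mp hx with hx' | hx'
    · rcases Finset.mem_union.mp hx' with hx'' | hx''
      · obtain ⟨i, _, rfl⟩ := mem_image.mp hx''
        exact ⟨a i, hmem i, a i, hmem i, by ring⟩
      · obtain ⟨i, _, rfl⟩ := mem_image.mp hx''
        exact ⟨a i, hmem i, a (i+1), hmem (i+1), by ring⟩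
    · obtain ⟨i, _, rfl⟩ := mem_image.mp hx'
      exact ⟨a (i+1), hmem (i+1), a i, hmem i, by ring⟩
  have hlow : 3 * k - 2 ≤ T.card := by
    have := Finset.card_le_card hCsub
    omega
  constructor
  · push_cast; omega
  constructor
  · -- equality implies AP
    intro hTcard
    have hTcard' : T.card = 3 * k - 2 := by push_cast at hTcard; omega
    have hCT : X ∪ Y ∪ Z = T :=
      Finset.eq_of_subset_of_card_le hCsub (by omega)
    have hmemC : ∀ x ∈ T, x ∈ X ∪ Y ∪ Z := fun x hx => hCT ▸ hx
    have step : ∀ i, i + 2 < k → a (i+2) - a (i+1) = a (i+1) - a i := by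
      intro i hik
      have hxT : 2 * a i + a (i+2) ∈ T := by
        rw [hT, Finset.mem_image₂]
        exact ⟨a i, hmem i, a (i+2), hmem (i+2), rfl⟩
      have hd1 := hmono (by omega : i < i+1) (by omega : i+1 < k)
      have hd2 := hmono (by omega : i+1 < i+2) hik
      rcases Finset.mem_union.mp (hmemC _ hxT) with hx' | hx'
      · rcases Finset.mem_union.mp hx' with hx'' | hx''
        · -- x = 3 a j, forces j = i+1, then use y to contradict
          obtain ⟨j, hj, hxv⟩ := mem_image.mp hx''
          rw [mem_range] at hj
          beta_reduce at hxv
          have hji1 : i < j := by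
            by_contra hc
            have := hle (by omega : j ≤ i) (by omega : i < k)
            omega
          have hji2 : j < i + 2 := by
            by_contra hc
            have := hle (by omega : i+2 ≤ j) hj
            omega
          have heq : 2 * a i + a (i+2) = 3 * a (i+1) := by
            have : j = i + 1 := by omega
            rw [this] at hxv; omega
          exfalso
          have hyT : a i + 2 * a (i+2) ∈ T := by
            rw [hT, Finset.mem_image₂]
            exact ⟨a (i+2), hmem (i+2), a i, hmem i, by ring⟩
          rcases Finset.mem_union.mp (hmemC _ hyT) with hy' | hy'
          · rcases Finset.mem_union.mp hy' with hy'' | hy''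
            · obtain ⟨j', hj', hyv⟩ := mem_image.mp hy''
              rw [mem_range] at hj'
              beta_reduce at hyv
              rcases le_or_gt j' i with h | h
              · have := hle h (by omega : i < k); omega
              rcases lt_or_ge j' (i+2) with h2 | h2
              · have : j' = i + 1 := by omega
                rw [this] at hyv; omega
              · have := hle h2 hj'; omega
            · obtain ⟨j', hj', hyv⟩ := mem_image.mp hy''
              rw [mem_range] at hj'
              beta_reduce at hyv
              rcases le_or_gt j' i with h | h
              · have h1 := hle h (by omega : i < k)
                have h2 := hle (by omega : j'+1 ≤ i+1) (by omega : i+1 < k)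
                omega
              rcases lt_or_ge j' (i+2) with h2 | h2
              · have : j' = i + 1 := by omega
                rw [this, show i+1+1 = i+2 from rfl] at hyv; omega
              · have h1 := hle h2 (by omega : j' < k)
                have h2 := hmono (by omega : i+2 < j'+1) (by omega : j'+1 < k)
                omega
          · obtain ⟨j', hj', hyv⟩ := mem_image.mp hy'
            rw [mem_range] at hj'
            beta_reduce at hyv
            rcases le_or_gt j' i with h | h
            · have h1 := hle h (by omega : i < k)
              have h2 := hle (by omega : j'+1 ≤ i+1) (by omega : i+1 < k)
              omega
            rcases lt_or_ge j' (i+2) with h2 | h2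
            · have : j' = i + 1 := by omega
              rw [this, show i+1+1 = i+2 from rfl] at hyv; omega
            · have h1 := hle h2 (by omega : j' < k)
              have h2 := hmono (by omega : i+2 < j'+1) (by omega : j'+1 < k)
              omega
        · -- x = 2 a j + a (j+1) : impossible
          exfalso
          obtain ⟨j, hj, hxv⟩ := mem_image.mp hx''
          rw [mem_range] at hj
          beta_reduce at hxv
          rcases le_or_gt j i with h | h
          · have h1 := hle h (by omega : i < k)
            have h2 := hle (by omega : j+1 ≤ i+1) (by omega : i+1 < k)
            omega
          · have h1 : a (i+1) ≤ a j := hle (by omega) (by omega)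
            have h2 : a (i+2) ≤ a (j+1) := hle (by omega) (by omega)
            omega
      · -- x = a j + 2 a (j+1) : forces j = i, gives conclusion
        obtain ⟨j, hj, hxv⟩ := mem_image.mp hx'
        rw [mem_range] at hj
        beta_reduce at hxv
        rcases lt_trichotomy j i with h | h | h
        · exfalso
          have h1 := hmono h (by omega : i < k)
          have h2 := hle (by omega : j+1 ≤ i) (by omega : i < k)
          omega
        · rw [h] at hxv; omega
        · exfalso
          have h1 : a (i+1) ≤ a j := hle (by omega) (by omega)
          have h2 : a (i+2) ≤ a (j+1) := hle (by omega) (by omega)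
          omega
    have hform : ∀ i, i < k → a i = a 0 + (i : ℤ) * (a 1 - a 0) := by
      intro i
      induction i using Nat.strong_induction_on with
      | _ i ih =>
        match i with
        | 0 => intro _; simp
        | 1 => intro _; push_cast; ring
        | (n+2) =>
          intro hn
          have hs := step n hn
          have h1 := ih n (by omega) (by omega)
          have h2 := ih (n+1) (by omega) (by omega)
          push_cast at h1 h2 ⊢
          linarith
    refine ⟨a 0, a 1 - a 0, ?_⟩
    ext v
    simp only [mem_image, mem_range]
    constructor
    · intro hv
      obtain ⟨i, hi, rfl⟩ := hsurj v hv
      exact ⟨i, hi, (hform i hi).symm⟩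
    · rintro ⟨i, hi, rfl⟩
      rw [← hform i hi]
      exact hmem i
  · -- AP implies equality
    rintro ⟨u, d, hAeq⟩
    rcases eq_or_lt_of_le hk1 with hk1' | hk2
    · -- k = 1
      obtain ⟨v, hv⟩ := Finset.card_eq_one.mp (hk ▸ hk1'.symm : A.card = 1)
      have : T = {2 * v + v} := by rw [hT, hv, Finset.image₂_singleton]
      rw [this]
      simp [← hk1']
    · -- k ≥ 2
      have hd : d ≠ 0 := by
        intro hd0
        have hsub : A ⊆ {u} := by
          intro x hx
          rw [hAeq, mem_image] at hx
          obtain ⟨i, _, rfl⟩ := hx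
          simp [hd0]
        have := Finset.card_le_card hsub
        simp at this
        omega
      have hTeq : T = (range (3*k-2)).image (fun m : ℕ => 3*u + (m:ℤ)*d) := by
        ext x
        rw [hT, Finset.mem_image₂, mem_image]
        constructor
        · rintro ⟨x₁, hx₁, x₂, hx₂, rfl⟩
          rw [hAeq, mem_image] at hx₁ hx₂
          obtain ⟨i, hi, rfl⟩ := hx₁
          obtain ⟨j, hj, rfl⟩ := hx₂
          rw [mem_range] at hi hj
          refine ⟨2*i+j, mem_range.mpr (by omega), ?_⟩
          push_cast
          ring
        · rintro ⟨m, hm, rfl⟩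
          rw [mem_range] at hm
          obtain ⟨i, j, hi, hj, hij⟩ : ∃ i j, i < k ∧ j < k ∧ 2*i+j = m := by
            rcases le_or_gt m (k-1) with h | h
            · exact ⟨0, m, by omega, by omega, by omega⟩
            rcases le_or_gt m (2*k-2) with h2 | h2
            · exact ⟨m-(k-1), 2*(k-1)-m, by omega, by omega, by omega⟩
            · exact ⟨k-1, m-2*(k-1), by omega, by omega, by omega⟩
          refine ⟨u + i*d, ?_, u + j*d, ?_, ?_⟩
          · rw [hAeq, mem_image]; exact ⟨i, mem_range.mpr hi, rfl⟩
          · rw [hAeq, mem_image]; exact ⟨j, mem_range.mpr hj, rfl⟩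
          · rw [← hij]; push_cast; ring
      rw [hTeq, card_image_of_injOn, card_range]
      · push_cast; omega
      · intro m₁ _ m₂ _ h
        beta_reduce at h
        have : (m₁ : ℤ) * d = (m₂ : ℤ) * d := by linarith
        have := mul_right_cancel₀ hd this
        exact_mod_cast this

theorem stmt9 (A : Finset ℤ) (hA : A.Nonempty) (S : Finset (BS 2))
    (hS : S = A.image (fun x => bsb 2 * bsa 2 ^ x)) :
    3 * (S.card : ℤ) - 2 ≤ (S * S).card ∧
    (((S * S).card : ℤ) = 3 * S.card - 2 ↔
      ∃ u d : ℤ, A = (Finset.range A.card).image (fun i : ℕ => u + (i : ℤ) * d)) := by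
  subst hS
  set T := Finset.image₂ (fun x y => 2*x + y) A A with hT
  have hScard : (A.image (fun x => bsb 2 * bsa 2 ^ x)).card = A.card := by
    apply Finset.card_image_of_injOn
    intro x _ y _ h
    have h0 := congrArg (fun g => bsφ g 0) h
    simp only [bs_eval] at h0
    have : (x : ℚ) = y := by linarith
    exact_mod_cast this
  have hSS : (A.image (fun x => bsb 2 * bsa 2 ^ x)) * (A.image (fun x => bsb 2 * bsa 2 ^ x))
      = T.image (fun m => bsb 2 * bsb 2 * bsa 2 ^ m) := by
    ext z
    rw [Finset.mem_mul, Finset.mem_image]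
    constructor
    · rintro ⟨s, hs, t, ht, rfl⟩
      obtain ⟨x, hx, rfl⟩ := Finset.mem_image.mp hs
      obtain ⟨y, hy, rfl⟩ := Finset.mem_image.mp ht
      exact ⟨2*x + y, Finset.mem_image₂.mpr ⟨x, hx, y, hy, rfl⟩, (prod_formula x y).symm⟩
    · rintro ⟨m, hm, rfl⟩
      obtain ⟨x, hx, y, hy, rfl⟩ := Finset.mem_image₂.mp hm
      exact ⟨bsb 2 * bsa 2 ^ x, Finset.mem_image_of_mem _ hx,
        bsb 2 * bsa 2 ^ y, Finset.mem_image_of_mem _ hy, prod_formula x y⟩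
  have hSScard : ((A.image (fun x => bsb 2 * bsa 2 ^ x)) *
      (A.image (fun x => bsb 2 * bsa 2 ^ x))).card = T.card := by
    rw [hSS]
    apply Finset.card_image_of_injOn
    intro m₁ _ m₂ _ h
    have h0 := congrArg (fun g => bsφ g 0) h
    simp only [bs_eval2] at h0
    have : (m₁ : ℚ) = m₂ := by linarith
    exact_mod_cast this
  have hkey := key A hA
  rw [hScard, hSScard]
  exact hkey
end

section
/- Let S ⊆ BS(1,2) be finite with S = U ∪ V, U = bᵐ·a^M ≠ ∅ and V = bⁿ·a^N ≠ ∅, where 0 ≤ m < n are integers and M, N ⊆ ℤ are finite. Then 2·|S²| ≥ 7·|S| − 8. -/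
open Pointwise

lemma a_zpow_b (x : ℤ) : bsa 2 ^ x * bsb 2 = bsb 2 * bsa 2 ^ (2 * x) := by
  have conj : bsb 2 * bsa 2 ^ (2:ℤ) * (bsb 2)⁻¹ = bsa 2 := by
    rw [← bs_rel]; group
  have : bsb 2 * (bsa 2 ^ (2:ℤ)) ^ x * (bsb 2)⁻¹ = bsa 2 ^ x := by
    rw [← conj_zpow, conj]
  rw [← zpow_mul] at this
  rw [← this]; group

lemma a_zpow_b_pow (j : ℕ) (x : ℤ) : bsa 2 ^ x * bsb 2 ^ j = bsb 2 ^ j * bsa 2 ^ (2 ^ j * x) := by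
  induction j generalizing x with
  | zero => simp
  | succ k ih =>
      rw [pow_succ, ← mul_assoc, ih, mul_assoc, a_zpow_b, ← mul_assoc, ← pow_succ]
      ring_nf

def psi (j : ℕ) (x : ℤ) : BS 2 := bsb 2 ^ j * bsa 2 ^ x

lemma psi_mul (i j : ℕ) (x y : ℤ) : psi i x * psi j y = psi (i + j) (2 ^ j * x + y) := by
  unfold psi
  rw [mul_assoc, ← mul_assoc (bsa 2 ^ x), a_zpow_b_pow, mul_assoc, ← zpow_add, ← mul_assoc,
    ← pow_add]

noncomputable def permA : Equiv.Perm ℚ := Equiv.addRight 1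
noncomputable def permB : Equiv.Perm ℚ := Equiv.mulLeft₀ (2⁻¹ : ℚ) (by norm_num)

lemma perm_rel : ∀ r ∈ BSRel 2, FreeGroup.lift (fun b => if b then permA else permB) r = 1 := by
  intro r hr
  simp only [BSRel, Set.mem_singleton_iff] at hr
  subst hr
  simp only [map_mul, map_inv, map_zpow, FreeGroup.lift_apply_of, if_true, if_false]
  rw [mul_inv_eq_one]
  ext x
  simp [permA, permB, Equiv.Perm.mul_apply, zpow_two]
  ring

noncomputable def phi : BS 2 →* Equiv.Perm ℚ := PresentedGroup.toGroup perm_rel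

lemma phi_a : phi (bsa 2) = permA := PresentedGroup.toGroup.of perm_rel
lemma phi_b : phi (bsb 2) = permB := PresentedGroup.toGroup.of perm_rel

lemma permA_zpow (x : ℤ) : ∀ t : ℚ, (permA ^ x) t = t + x := by
  induction x using Int.induction_on with
  | zero => simp
  | succ k ih => intro t; rw [zpow_add_one, Equiv.Perm.mul_apply, ih]; simp [permA]; ring
  | pred k ih => intro t; rw [zpow_sub_one, Equiv.Perm.mul_apply, ih]; simp [permA]; ring

lemma permB_pow (j : ℕ) : ∀ t : ℚ, (permB ^ j) t = t / 2 ^ j := by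
  induction j with
  | zero => simp
  | succ k ih =>
      intro t
      rw [pow_succ, Equiv.Perm.mul_apply, ih]
      simp [permB]
      ring

lemma phi_psi (j : ℕ) (x : ℤ) (t : ℚ) : phi (psi j x) t = (t + x) / 2 ^ j := by
  unfold psi
  rw [map_mul, map_pow, map_zpow, phi_a, phi_b, Equiv.Perm.mul_apply, permA_zpow, permB_pow]

lemma psi_inj {i j : ℕ} {x y : ℤ} (h : psi i x = psi j y) : i = j ∧ x = y := by
  have h0 := congrArg (fun g => phi g (0:ℚ)) h
  have h1 := congrArg (fun g => phi g (1:ℚ)) h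
  simp only [phi_psi, zero_add] at h0 h1
  have h2i : (2:ℚ) ^ i ≠ 0 := by positivity
  have h2j : (2:ℚ) ^ j ≠ 0 := by positivity
  field_simp at h0 h1
  have hpow : (2:ℚ) ^ j = 2 ^ i := by linear_combination h1 - h0
  have hij : i = j := by
    have : ((2^j : ℕ) : ℚ) = ((2^i : ℕ) : ℚ) := by push_cast; exact hpow
    have := Nat.cast_injective this
    exact (Nat.pow_right_injective (le_refl 2) this).symm
  subst hij
  refine ⟨rfl, ?_⟩
  rw [hpow] at h0
  have : (x:ℚ) = y := mul_right_cancel₀ h2i (h0.trans (mul_comm _ _))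
  exact_mod_cast this

/-- `D c X Y = c•X + Y` as a finset of integers. -/
def D (c : ℤ) (X Y : Finset ℤ) : Finset ℤ := Finset.image₂ (fun x y => c * x + y) X Y

lemma mem_D {c : ℤ} {X Y : Finset ℤ} {z : ℤ} :
    z ∈ D c X Y ↔ ∃ x ∈ X, ∃ y ∈ Y, c * x + y = z := by
  simp [D, Finset.mem_image₂]

lemma disjoint_of_sep {A B : Finset ℤ} {c : ℤ} (hA : ∀ a ∈ A, a < c) (hB : ∀ b ∈ B, c ≤ b) :
    Disjoint A B := by
  rw [Finset.disjoint_left]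
  intro a ha hb
  exact absurd (hB a hb) (not_le.mpr (hA a ha))

lemma D_nonempty {c : ℤ} {X Y : Finset ℤ} (hX : X.Nonempty) (hY : Y.Nonempty) :
    (D c X Y).Nonempty := by
  obtain ⟨x, hx⟩ := hX; obtain ⟨y, hy⟩ := hY
  exact ⟨c*x+y, mem_D.mpr ⟨x, hx, y, hy, rfl⟩⟩

/-- basic sumset bound : |c•X + Y| ≥ |X| + |Y| - 1 for c ≥ 1. -/
lemma L_sum {c : ℤ} (hc : 1 ≤ c) {X Y : Finset ℤ} (hX : X.Nonempty) (hY : Y.Nonempty) :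
    (X.card : ℤ) + Y.card - 1 ≤ ((D c X Y).card : ℤ) := by
  classical
  set s := X.min' hX with hs
  set t := Y.max' hY with ht
  have hcne : c ≠ 0 := by omega
  set F1 : Finset ℤ := Y.image (fun y => c * s + y) with hF1
  set F2 : Finset ℤ := X.image (fun x => c * x + t) with hF2
  have hF1card : F1.card = Y.card := Finset.card_image_of_injective _ (fun a b h => by omega)
  have hF2card : F2.card = X.card := Finset.card_image_of_injective _ (fun a b h => by
    have : c * a = c * b := by omega
    exact mul_left_cancel₀ hcne this)
  have hsub : F1 ∪ F2 ⊆ D c X Y := by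
    intro z hz
    rcases Finset.mem_union.mp hz with h | h
    · obtain ⟨y, hy, rfl⟩ := Finset.mem_image.mp h
      exact mem_D.mpr ⟨s, X.min'_mem hX, y, hy, rfl⟩
    · obtain ⟨x, hx, rfl⟩ := Finset.mem_image.mp h
      exact mem_D.mpr ⟨x, hx, t, Y.max'_mem hY, rfl⟩
  have hinter : F1 ∩ F2 ⊆ {c * s + t} := by
    intro z hz
    rw [Finset.mem_inter] at hz
    obtain ⟨y, hy, h1⟩ := Finset.mem_image.mp hz.1
    obtain ⟨x, hx, h2⟩ := Finset.mem_image.mp hz.2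
    have hyt : y ≤ t := Y.le_max' y hy
    have hsx : s ≤ x := X.min'_le x hx
    have hcsx : c * s ≤ c * x := by
      apply mul_le_mul_of_nonneg_left hsx (by omega)
    rw [Finset.mem_singleton]
    omega
  have h1 : F1.card + F2.card = (F1 ∪ F2).card + (F1 ∩ F2).card :=
    (Finset.card_union_add_card_inter F1 F2).symm
  have h2 : (F1 ∩ F2).card ≤ 1 := by
    calc (F1 ∩ F2).card ≤ ({c*s+t} : Finset ℤ).card := Finset.card_le_card hinter
    _ = 1 := Finset.card_singleton _
  have h3 : (F1 ∪ F2).card ≤ (D c X Y).card := Finset.card_le_card hsub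
  omega

/-- |c•X + X| ≥ 3|X| - 2 for c ≥ 2. -/
lemma L_dilate3 {c : ℤ} (hc : 2 ≤ c) :
    ∀ (k : ℕ) (X : Finset ℤ), X.card ≤ k → X.Nonempty →
      3 * (X.card : ℤ) - 2 ≤ ((D c X X).card : ℤ) := by
  intro k
  induction k with
  | zero => intro X hk hne; exact absurd (Finset.card_pos.mpr hne) (by omega)
  | succ k ih =>
      intro X hk hne
      rcases Nat.lt_or_ge X.card (k+1) with hlt | hge
      · exact ih X (by omega) hne
      have hcard : X.card = k + 1 := by omega
      rcases Nat.lt_or_ge X.card 2 with h1 | h2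
      · -- card = 1
        have : 3 * (X.card : ℤ) - 2 = 1 := by
          have : X.card = 1 := by have := Finset.card_pos.mpr hne; omega
          rw [this]; ring
        rw [this]
        have : (D c X X).Nonempty := by
          obtain ⟨x, hx⟩ := hne
          exact ⟨c*x+x, mem_D.mpr ⟨x, hx, x, hx, rfl⟩⟩
        exact_mod_cast Finset.card_pos.mpr this
      · -- card ≥ 2
        set a := X.max' hne with ha
        set X' := X.erase a with hX'
        have hX'card : X'.card = k := by
          rw [hX', Finset.card_erase_of_mem (X.max'_mem hne)]; omega
        have hX'ne : X'.Nonempty := by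
          rw [← Finset.card_pos, hX'card]; omega
        set a' := X'.max' hX'ne with ha'
        have ha'X : a' ∈ X := Finset.mem_of_mem_erase (X'.max'_mem hX'ne)
        have haX : a ∈ X := X.max'_mem hne
        have ha'lt : a' < a := by
          have h1 : a' ≤ a := X.le_max' a' ha'X
          have h2 : a' ≠ a := Finset.ne_of_mem_erase (X'.max'_mem hX'ne)
          omega
        have hkey : ∀ z ∈ D c X' X', z < c * a' + a := by
          intro z hz
          obtain ⟨u, hu, v, hv, rfl⟩ := mem_D.mp hz
          have h1 : u ≤ a' := X'.le_max' u hu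
          have h2 : v ≤ a' := X'.le_max' v hv
          have : c * u ≤ c * a' := mul_le_mul_of_nonneg_left h1 (by omega)
          omega
        set T : Finset ℤ := {c * a + a, c * a + a', c * a' + a} with hT
        have hT3 : T.card = 3 := by
          rw [hT]
          rw [Finset.card_insert_of_notMem, Finset.card_insert_of_notMem, Finset.card_singleton]
          · simp only [Finset.mem_singleton]
            have e2 : c * a' + a < c * a + a' := by nlinarith
            omega
          · simp only [Finset.mem_insert, Finset.mem_singleton]
            have e1 : c * a' < c * a := by nlinarith
            have e2 : c * a' + a < c * a + a' := by nlinarith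
            push_neg
            constructor <;> omega
        have hTsub : T ⊆ D c X X := by
          intro z hz
          rw [hT] at hz
          simp only [Finset.mem_insert, Finset.mem_singleton] at hz
          rcases hz with rfl | rfl | rfl
          · exact mem_D.mpr ⟨a, haX, a, haX, rfl⟩
          · exact mem_D.mpr ⟨a, haX, a', ha'X, rfl⟩
          · exact mem_D.mpr ⟨a', ha'X, a, haX, rfl⟩
        have hT'sub : D c X' X' ⊆ D c X X := by
          intro z hz
          obtain ⟨u, hu, v, hv, rfl⟩ := mem_D.mp hz
          exact mem_D.mpr ⟨u, Finset.mem_of_mem_erase hu, v, Finset.mem_of_mem_erase hv, rfl⟩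
        have hdisj : Disjoint (D c X' X') T := by
          rw [Finset.disjoint_left]
          intro z hz hzT
          have h1 := hkey z hz
          rw [hT] at hzT
          simp only [Finset.mem_insert, Finset.mem_singleton] at hzT
          have e1 : c * a' < c * a := by nlinarith
          have e2 : c * a' + a ≤ c * a + a' := by nlinarith
          rcases hzT with rfl | rfl | rfl <;> omega
        have hunion : (D c X' X') ∪ T ⊆ D c X X := Finset.union_subset hT'sub hTsub
        have hcardu : ((D c X' X') ∪ T).card = (D c X' X').card + 3 := by
          rw [Finset.card_union_of_disjoint hdisj, hT3]
        have hih := ih X' (by omega) hX'ne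
        have := Finset.card_le_card hunion
        rw [hX'card] at hih
        have h5 : (((D c X' X') ∪ T).card : ℤ) ≤ (D c X X).card := by exact_mod_cast Finset.card_le_card hunion
        rw [hcardu] at h5
        push_cast at h5 ⊢
        rw [hcard]
        push_cast
        omega

/-- Window lemma: if `w` points of `M` lie in the window `s ≤ q x ≤ t`
(`s=min M`, `t=max M`, `q ≥ 2`), then `|M+M| ≥ |M| + 2w - 2`. -/
lemma L_window {q : ℤ} (hq : 2 ≤ q) (M : Finset ℤ) (hM : M.Nonempty) :
    (M.card : ℤ) + 2 * ((M.filter (fun x => M.min' hM ≤ q * x ∧ q * x ≤ M.max' hM)).card : ℤ) - 2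
      ≤ ((D 1 M M).card : ℤ) := by
  classical
  set s := M.min' hM with hs
  set t := M.max' hM with ht
  set P := M.filter (fun x => s ≤ q * x ∧ q * x ≤ t) with hP
  rcases P.eq_empty_or_nonempty with hPe | hPne
  · -- trivial case: |M+M| ≥ |M|
    rw [hPe]
    have : M.card ≤ (D 1 M M).card := by
      have hsub : M.image (fun x => 1 * s + x) ⊆ D 1 M M := by
        intro z hz
        obtain ⟨x, hx, rfl⟩ := Finset.mem_image.mp hz
        exact mem_D.mpr ⟨s, M.min'_mem hM, x, hx, rfl⟩
      calc M.card = (M.image (fun x => 1 * s + x)).card :=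
            (Finset.card_image_of_injective _ (fun a b h => by omega)).symm
        _ ≤ _ := Finset.card_le_card hsub
    simp only [Finset.card_empty, Nat.cast_zero]
    push_cast
    omega
  set μ := P.min' hPne with hμ
  set ν := P.max' hPne with hν
  have hμM : μ ∈ M := Finset.mem_of_mem_filter _ (P.min'_mem hPne)
  have hνM : ν ∈ M := Finset.mem_of_mem_filter _ (P.max'_mem hPne)
  have hμν : μ ≤ ν := P.min'_le ν (P.max'_mem hPne)
  have hμprop : s ≤ q * μ ∧ q * μ ≤ t := (Finset.mem_filter.mp (P.min'_mem hPne)).2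
  have hνprop : s ≤ q * ν ∧ q * ν ≤ t := (Finset.mem_filter.mp (P.max'_mem hPne)).2
  -- key geometric fact: 2ν - t ≤ 2μ - s
  have hkey : 2 * ν - t ≤ 2 * μ - s := by nlinarith [hμprop.1, hνprop.2, hμν]
  set f1 := M.filter (fun x => x < 2 * μ - s) with hf1
  set f3 := M.filter (fun x => 2 * ν - t < x) with hf3
  set F1 := f1.image (fun x => 1 * s + x) with hF1
  set F3 := f3.image (fun x => 1 * x + t) with hF3
  set G1 := P.image (fun x => 1 * μ + x) with hG1
  set G2 := P.image (fun x => 1 * x + ν) with hG2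
  have hF1card : F1.card = f1.card := Finset.card_image_of_injective _ (fun a b h => by omega)
  have hF3card : F3.card = f3.card := Finset.card_image_of_injective _ (fun a b h => by omega)
  have hG1card : G1.card = P.card := Finset.card_image_of_injective _ (fun a b h => by omega)
  have hG2card : G2.card = P.card := Finset.card_image_of_injective _ (fun a b h => by omega)
  -- filters cover all but at most one point
  have hf13 : M.card - 1 ≤ f1.card + f3.card := by
    have hcover : M ⊆ f1 ∪ f3 ∪ {2 * μ - s} := by
      intro x hx
      simp only [Finset.mem_union, hf1, hf3, Finset.mem_filter, Finset.mem_singleton]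
      by_cases h1 : x < 2 * μ - s
      · exact Or.inl (Or.inl ⟨hx, h1⟩)
      · by_cases h2 : 2 * ν - t < x
        · exact Or.inl (Or.inr ⟨hx, h2⟩)
        · right; omega
    have := Finset.card_le_card hcover
    have h2 := Finset.card_union_le (f1 ∪ f3) ({2 * μ - s} : Finset ℤ)
    have h3 := Finset.card_union_le f1 f3
    simp only [Finset.card_singleton] at h2
    omega
  -- value bounds
  have hF1lt : ∀ z ∈ F1, z < 2 * μ := by
    intro z hz
    obtain ⟨x, hx, rfl⟩ := Finset.mem_image.mp hz
    have := (Finset.mem_filter.mp hx).2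
    omega
  have hGmem : ∀ z ∈ G1 ∪ G2, 2 * μ ≤ z ∧ z ≤ 2 * ν := by
    intro z hz
    rcases Finset.mem_union.mp hz with h | h
    · obtain ⟨x, hx, rfl⟩ := Finset.mem_image.mp h
      have h1 := P.min'_le x hx
      have h2 := P.le_max' x hx
      omega
    · obtain ⟨x, hx, rfl⟩ := Finset.mem_image.mp h
      have h1 := P.min'_le x hx
      have h2 := P.le_max' x hx
      omega
  have hF3gt : ∀ z ∈ F3, 2 * ν < z := by
    intro z hz
    obtain ⟨x, hx, rfl⟩ := Finset.mem_image.mp hz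
    have := (Finset.mem_filter.mp hx).2
    omega
  -- |G1 ∪ G2| = 2|P| - 1
  have hGinter : G1 ∩ G2 = {1 * μ + ν} := by
    apply Finset.Subset.antisymm
    · intro z hz
      rw [Finset.mem_inter] at hz
      obtain ⟨x, hx, h1⟩ := Finset.mem_image.mp hz.1
      obtain ⟨x', hx', h2⟩ := Finset.mem_image.mp hz.2
      have e1 := P.le_max' x hx
      have e2 := P.min'_le x' hx'
      rw [Finset.mem_singleton]
      omega
    · intro z hz
      rw [Finset.mem_singleton] at hz
      subst hz
      rw [Finset.mem_inter]
      constructor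
      · exact Finset.mem_image.mpr ⟨ν, P.max'_mem hPne, rfl⟩
      · refine Finset.mem_image.mpr ⟨μ, P.min'_mem hPne, by omega⟩
  have hGcard : (G1 ∪ G2).card = 2 * P.card - 1 ∧ 1 ≤ P.card := by
    have h1 := Finset.card_union_add_card_inter G1 G2
    rw [hGinter] at h1
    simp only [Finset.card_singleton] at h1
    have := Finset.card_pos.mpr hPne
    omega
  -- all pieces inside D 1 M M
  have hsub : F1 ∪ (G1 ∪ G2) ∪ F3 ⊆ D 1 M M := by
    intro z hz
    simp only [Finset.mem_union] at hz
    rcases hz with (h | h) | h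
    · obtain ⟨x, hx, rfl⟩ := Finset.mem_image.mp h
      exact mem_D.mpr ⟨s, M.min'_mem hM, x, Finset.mem_of_mem_filter _ hx, rfl⟩
    · rcases h with h' | h'
      · obtain ⟨x, hx, rfl⟩ := Finset.mem_image.mp h'
        exact mem_D.mpr ⟨μ, hμM, x, Finset.mem_of_mem_filter _ hx, rfl⟩
      · obtain ⟨x, hx, rfl⟩ := Finset.mem_image.mp h'
        exact mem_D.mpr ⟨x, Finset.mem_of_mem_filter _ hx, ν, hνM, rfl⟩
    · obtain ⟨x, hx, rfl⟩ := Finset.mem_image.mp h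
      exact mem_D.mpr ⟨x, Finset.mem_of_mem_filter _ hx, t, M.max'_mem hM, rfl⟩
  -- disjointness
  have hd1 : Disjoint F1 (G1 ∪ G2) := by
    rw [Finset.disjoint_left]
    intro z hz hz'
    exact absurd (hGmem z hz').1 (not_le.mpr (hF1lt z hz))
  have hd2 : Disjoint (F1 ∪ (G1 ∪ G2)) F3 := by
    rw [Finset.disjoint_left]
    intro z hz hz'
    have h3 := hF3gt z hz'
    rcases Finset.mem_union.mp hz with h | h
    · have := hF1lt z h; omega
    · have := (hGmem z h).2; omega
  have hcard : (F1 ∪ (G1 ∪ G2) ∪ F3).card = F1.card + (G1 ∪ G2).card + F3.card := by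
    rw [Finset.card_union_of_disjoint hd2, Finset.card_union_of_disjoint hd1]
  have hfinal := Finset.card_le_card hsub
  rw [hcard, hF1card, hF3card, hGcard.1] at hfinal
  have hPM : P.card ≤ M.card := Finset.card_le_card (Finset.filter_subset _ _)
  have h1M := Finset.card_pos.mpr hM
  push_cast
  omega

/-- Outlier lemma: `|qM+N ∪ N+M| ≥ |M|+|N|-1 + h + g`. -/
lemma L_outliers {q : ℤ} (hq : 2 ≤ q) (M N : Finset ℤ) (hM : M.Nonempty) (hN : N.Nonempty) :
    ((M.card : ℤ) + N.card - 1)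
      + ((M.filter (fun x => M.max' hM < q * x)).card : ℤ)
      + ((M.filter (fun x => q * x < M.min' hM)).card : ℤ)
      ≤ ((D q M N ∪ D 1 N M).card : ℤ) := by
  classical
  set s := M.min' hM with hs
  set t := M.max' hM with ht
  set u := N.min' hN with hu
  set v := N.max' hN with hv
  set fh := M.filter (fun x => t < q * x) with hfh
  set fg := M.filter (fun x => q * x < s) with hfg
  set B := D 1 N M with hB
  set Hi := fh.image (fun x => q * x + v) with hHi
  set Lo := fg.image (fun x => q * x + u) with hLo
  have hqne : q ≠ 0 := by omega
  have hinj : ∀ w : ℤ, Function.Injective (fun x => q * x + w) := by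
    intro w a b h
    simp only at h
    exact mul_left_cancel₀ hqne (by omega)
  have hHicard : Hi.card = fh.card := Finset.card_image_of_injective _ (hinj v)
  have hLocard : Lo.card = fg.card := Finset.card_image_of_injective _ (hinj u)
  have hBbound : ∀ z ∈ B, u + s ≤ z ∧ z ≤ v + t := by
    intro z hz
    obtain ⟨y, hy, x, hx, rfl⟩ := mem_D.mp hz
    have := M.min'_le x hx
    have := M.le_max' x hx
    have := N.min'_le y hy
    have := N.le_max' y hy
    omega
  have hHibound : ∀ z ∈ Hi, v + t < z := by
    intro z hz
    obtain ⟨x, hx, rfl⟩ := Finset.mem_image.mp hz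
    have := (Finset.mem_filter.mp hx).2
    omega
  have hLobound : ∀ z ∈ Lo, z < u + s := by
    intro z hz
    obtain ⟨x, hx, rfl⟩ := Finset.mem_image.mp hz
    have := (Finset.mem_filter.mp hx).2
    omega
  have hsub : B ∪ Hi ∪ Lo ⊆ D q M N ∪ D 1 N M := by
    intro z hz
    simp only [Finset.mem_union] at hz ⊢
    rcases hz with (h | h) | h
    · exact Or.inr h
    · obtain ⟨x, hx, rfl⟩ := Finset.mem_image.mp h
      exact Or.inl (mem_D.mpr ⟨x, Finset.mem_of_mem_filter _ hx, v, N.max'_mem hN, rfl⟩)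
    · obtain ⟨x, hx, rfl⟩ := Finset.mem_image.mp h
      exact Or.inl (mem_D.mpr ⟨x, Finset.mem_of_mem_filter _ hx, u, N.min'_mem hN, rfl⟩)
  have hd1 : Disjoint B Hi := by
    rw [Finset.disjoint_left]
    intro z hz hz'
    have := (hBbound z hz).2
    have := hHibound z hz'
    omega
  have hd2 : Disjoint (B ∪ Hi) Lo := by
    rw [Finset.disjoint_left]
    intro z hz hz'
    have h3 := hLobound z hz'
    have huv : u ≤ v := N.min'_le v (N.max'_mem hN)
    have hst : s ≤ t := M.min'_le t (M.max'_mem hM)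
    rcases Finset.mem_union.mp hz with h | h
    · have := (hBbound z h).1; omega
    · have := hHibound z h; omega
  have hcard : (B ∪ Hi ∪ Lo).card = B.card + fh.card + fg.card := by
    rw [Finset.card_union_of_disjoint hd2, Finset.card_union_of_disjoint hd1, hHicard, hLocard]
  have hfinal := Finset.card_le_card hsub
  rw [hcard] at hfinal
  have hBc : (N.card : ℤ) + M.card - 1 ≤ (B.card : ℤ) := L_sum (by omega) hN hM
  simp only [← hB] at hfinal ⊢
  push_cast
  push_cast at hBc
  omega

theorem THM_Z {p q : ℤ} (hp : 1 ≤ p) (hq : 2 ≤ q) (M N : Finset ℤ)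
    (hM : M.Nonempty) (hN : N.Nonempty) :
    7 * ((M.card : ℤ) + N.card) - 8 ≤
      2 * (((D p M M).card : ℤ) + ((D q M N ∪ D p N M).card : ℤ) + ((D q N N).card : ℤ)) := by
  classical
  have hk : 1 ≤ (M.card : ℤ) := by exact_mod_cast Finset.card_pos.mpr hM
  have hl : 1 ≤ (N.card : ℤ) := by exact_mod_cast Finset.card_pos.mpr hN
  have hT3 : 3 * (N.card : ℤ) - 2 ≤ ((D q N N).card : ℤ) := L_dilate3 hq N.card N le_rfl hN
  have hT2' : (N.card : ℤ) + M.card - 1 ≤ ((D q M N ∪ D p N M).card : ℤ) := by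
    calc (N.card : ℤ) + M.card - 1 ≤ ((D p N M).card : ℤ) := L_sum hp hN hM
      _ ≤ _ := by exact_mod_cast Finset.card_le_card Finset.subset_union_right
  rcases eq_or_lt_of_le hp with hp1 | hp2
  · -- p = 1
    subst hp1
    set s := M.min' hM with hs
    set t := M.max' hM with ht
    set fh := M.filter (fun x => t < q * x) with hfh
    set fg := M.filter (fun x => q * x < s) with hfg
    set P := M.filter (fun x => s ≤ q * x ∧ q * x ≤ t) with hP
    have hcover : M ⊆ fh ∪ fg ∪ P := by
      intro x hx
      simp only [Finset.mem_union, hfh, hfg, hP, Finset.mem_filter]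
      by_cases h1 : t < q * x
      · exact Or.inl (Or.inl ⟨hx, h1⟩)
      · by_cases h2 : q * x < s
        · exact Or.inl (Or.inr ⟨hx, h2⟩)
        · exact Or.inr ⟨hx, by omega, by omega⟩
    have hpartition : (M.card : ℤ) ≤ fh.card + fg.card + P.card := by
      have h1 := Finset.card_le_card hcover
      have h2 := Finset.card_union_le (fh ∪ fg) P
      have h3 := Finset.card_union_le fh fg
      push_cast
      omega
    have hT2 : ((M.card : ℤ) + N.card - 1) + fh.card + fg.card
        ≤ ((D q M N ∪ D 1 N M).card : ℤ) := L_outliers hq M N hM hN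
    have hT1a : (M.card : ℤ) + M.card - 1 ≤ ((D 1 M M).card : ℤ) := L_sum le_rfl hM hM
    have hT1b : (M.card : ℤ) + 2 * (P.card : ℤ) - 2 ≤ ((D 1 M M).card : ℤ) := L_window hq M hM
    rcases le_or_gt (2 * (P.card : ℤ)) ((M.card : ℤ) + N.card) with hw | hw
    · linarith
    · linarith
  · -- p ≥ 2
    have hT1 : 3 * (M.card : ℤ) - 2 ≤ ((D p M M).card : ℤ) := L_dilate3 (by omega) M.card M le_rfl hM
    linarith

lemma psi_injective (i : ℕ) : Function.Injective (psi i) := fun x y h => (psi_inj h).2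

lemma card_image_psi (i : ℕ) (X : Finset ℤ) : (X.image (psi i)).card = X.card :=
  Finset.card_image_of_injective _ (psi_injective i)

lemma disj_images {i j : ℕ} (hij : i ≠ j) (X Y : Finset ℤ) :
    Disjoint (X.image (psi i)) (Y.image (psi j)) := by
  rw [Finset.disjoint_left]
  rintro g hg hg'
  obtain ⟨x, _, rfl⟩ := Finset.mem_image.mp hg
  obtain ⟨y, _, he⟩ := Finset.mem_image.mp hg'
  exact hij (psi_inj he.symm).1

lemma mul_images (i j : ℕ) (X Y : Finset ℤ) :
    (X.image (psi i)) * (Y.image (psi j)) = (D ((2:ℤ)^j) X Y).image (psi (i+j)) := by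
  ext g
  simp only [Finset.mem_mul, Finset.mem_image, mem_D]
  constructor
  · rintro ⟨u, ⟨x, hx, rfl⟩, v, ⟨y, hy, rfl⟩, rfl⟩
    exact ⟨2^j*x+y, ⟨x, hx, y, hy, rfl⟩, (psi_mul i j x y).symm⟩
  · rintro ⟨z, ⟨x, hx, y, hy, rfl⟩, rfl⟩
    exact ⟨psi i x, ⟨x, hx, rfl⟩, psi j y, ⟨y, hy, rfl⟩, psi_mul i j x y⟩

theorem stmt14 (m n : ℕ) (hmn : m < n) (M N : Finset ℤ)
    (hM : M.Nonempty) (hN : N.Nonempty) (S U V : Finset (BS 2))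
    (hU : U = M.image (fun x => bsb 2 ^ m * bsa 2 ^ x))
    (hV : V = N.image (fun x => bsb 2 ^ n * bsa 2 ^ x))
    (hS : S = U ∪ V) :
    7 * (S.card : ℤ) - 8 ≤ 2 * ((S * S).card : ℤ) := by
  classical
  have hU' : U = M.image (psi m) := hU
  have hV' : V = N.image (psi n) := hV
  clear hU hV
  subst hS hU' hV'
  set p : ℤ := 2 ^ m with hp'
  set q : ℤ := 2 ^ n with hq'
  have hp : 1 ≤ p := one_le_pow₀ one_le_two
  have hq : 2 ≤ q := le_self_pow₀ one_le_two (by omega)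
  have hScard : ((M.image (psi m)) ∪ (N.image (psi n))).card = M.card + N.card := by
    rw [Finset.card_union_of_disjoint (disj_images (by omega) M N),
      card_image_psi, card_image_psi]
  set E1 := (D p M M).image (psi (m+m)) with hE1
  set E2 := (D q M N ∪ D p N M).image (psi (m+n)) with hE2
  set E3 := (D q N N).image (psi (n+n)) with hE3
  have hprod : (M.image (psi m) ∪ N.image (psi n)) * (M.image (psi m) ∪ N.image (psi n))
      = E1 ∪ E2 ∪ E3 := by
    rw [Finset.union_mul, Finset.mul_union, Finset.mul_union, mul_images, mul_images,
      mul_images, mul_images, Nat.add_comm n m, hE1, hE2, hE3, Finset.image_union]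
    ac_rfl
  rw [hprod, hScard]
  have hd12 : Disjoint E1 E2 := disj_images (by omega) _ _
  have hd13 : Disjoint E1 E3 := disj_images (by omega) _ _
  have hd23 : Disjoint E2 E3 := disj_images (by omega) _ _
  rw [Finset.card_union_of_disjoint (Finset.disjoint_union_left.mpr ⟨hd13, hd23⟩),
    Finset.card_union_of_disjoint hd12]
  rw [hE1, hE2, hE3, card_image_psi, card_image_psi, card_image_psi]
  have := THM_Z hp hq M N hM hN
  push_cast at this ⊢
  linarith
end

section
/- Let S ⊆ BS(1,2) be a finite set of size k = t+2 of the form S = {1, a} ∪ {b, b², ..., bᵗ} with t ≥ 2. Then |S²| = 4k − 5. -/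
open Pointwise

noncomputable def Ea : Equiv.Perm ℚ := Equiv.addRight 1
noncomputable def Eb : Equiv.Perm ℚ := Equiv.mulLeft₀ (1/2 : ℚ) (by norm_num)

lemma Ea_apply (x : ℚ) : Ea x = x + 1 := rfl
lemma Eb_apply (x : ℚ) : Eb x = (1/2) * x := rfl

lemma rel_holds : ∀ r ∈ BSRel 2, FreeGroup.lift (fun x => if x then Ea else Eb) r = 1 := by
  intro r hr
  simp only [BSRel, Set.mem_singleton_iff] at hr
  subst hr
  simp only [map_mul, map_inv, map_zpow, FreeGroup.lift_apply_of, if_true, if_false]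
  rw [mul_inv_eq_one]
  ext x
  simp [Ea, Eb, Equiv.Perm.mul_apply]
  ring

noncomputable def φ : BS 2 →* Equiv.Perm ℚ := PresentedGroup.toGroup rel_holds

lemma phi_a_s15 : φ (bsa 2) = Ea := PresentedGroup.toGroup.of rel_holds
lemma phi_b_s15 : φ (bsb 2) = Eb := PresentedGroup.toGroup.of rel_holds

lemma Eb_pow_apply (n : ℕ) (x : ℚ) : (Eb ^ n) x = (1/2 : ℚ)^n * x := by
  induction n with
  | zero => simp
  | succ n ih => rw [pow_succ', Equiv.Perm.mul_apply, Eb_apply, ih, pow_succ']; ring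

lemma ev_one (x : ℚ) : φ 1 x = x := by simp
lemma ev_a (x : ℚ) : φ (bsa 2) x = x + 1 := by rw [phi_a_s15, Ea_apply]
lemma ev_a2 (x : ℚ) : φ (bsa 2 ^ 2) x = x + 2 := by
  rw [map_pow, pow_two, Equiv.Perm.mul_apply, phi_a_s15, Ea_apply, Ea_apply]; ring
lemma ev_bpow (n : ℕ) (x : ℚ) : φ (bsb 2 ^ n) x = (1/2:ℚ)^n * x := by
  rw [map_pow, phi_b_s15, Eb_pow_apply]
lemma ev_ab (n : ℕ) (x : ℚ) : φ (bsa 2 * bsb 2 ^ n) x = (1/2:ℚ)^n * x + 1 := by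
  rw [map_mul, Equiv.Perm.mul_apply, map_pow, phi_b_s15, Eb_pow_apply, phi_a_s15, Ea_apply]
lemma ev_ba (n : ℕ) (x : ℚ) : φ (bsb 2 ^ n * bsa 2) x = (1/2:ℚ)^n * (x + 1) := by
  rw [map_mul, Equiv.Perm.mul_apply, phi_a_s15, Ea_apply, map_pow, phi_b_s15, Eb_pow_apply]

lemma ne_of_ev {g h : BS 2} (x : ℚ) (hx : φ g x ≠ φ h x) : g ≠ h :=
  fun e => hx (by rw [e])

lemma half_pow_lt_one (n : ℕ) : (1/2:ℚ)^(n+1) < 1 :=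
  pow_lt_one₀ (by norm_num) (by norm_num) (Nat.succ_ne_zero n)
lemma half_pow_pos (n : ℕ) : (0:ℚ) < (1/2)^n := pow_pos (by norm_num) n
lemma half_pow_inj : Function.Injective (fun n : ℕ => (1/2:ℚ)^n) :=
  pow_right_injective₀ (by norm_num) (by norm_num)

-- distinctness lemmas
lemma ne_one_a : (1 : BS 2) ≠ bsa 2 :=
  ne_of_ev 0 (by rw [ev_one, ev_a]; norm_num)
lemma ne_one_a2 : (1 : BS 2) ≠ bsa 2 ^ 2 :=
  ne_of_ev 0 (by rw [ev_one, ev_a2]; norm_num)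
lemma ne_a_a2 : bsa 2 ≠ bsa 2 ^ 2 :=
  ne_of_ev 0 (by rw [ev_a, ev_a2]; norm_num)
lemma ne_b_one (n : ℕ) : bsb 2 ^ (n+1) ≠ 1 :=
  ne_of_ev 1 (by rw [ev_bpow, ev_one]; have := half_pow_lt_one n; nlinarith)
lemma ne_b_a (n : ℕ) : bsb 2 ^ (n+1) ≠ bsa 2 :=
  ne_of_ev 0 (by rw [ev_bpow, ev_a]; norm_num)
lemma ne_b_a2 (n : ℕ) : bsb 2 ^ (n+1) ≠ bsa 2 ^ 2 :=
  ne_of_ev 0 (by rw [ev_bpow, ev_a2]; norm_num)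
lemma ne_ab_one (n : ℕ) : bsa 2 * bsb 2 ^ (n+1) ≠ 1 :=
  ne_of_ev 0 (by rw [ev_ab, ev_one]; have := half_pow_pos (n+1); nlinarith)
lemma ne_ab_a (n : ℕ) : bsa 2 * bsb 2 ^ (n+1) ≠ bsa 2 :=
  ne_of_ev 1 (by rw [ev_ab, ev_a]; have := half_pow_lt_one n; nlinarith)
lemma ne_ab_a2 (n : ℕ) : bsa 2 * bsb 2 ^ (n+1) ≠ bsa 2 ^ 2 :=
  ne_of_ev 0 (by rw [ev_ab, ev_a2]; have := half_pow_lt_one n; nlinarith)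
lemma ne_ab_b (n m : ℕ) : bsa 2 * bsb 2 ^ (n+1) ≠ bsb 2 ^ (m+1) :=
  ne_of_ev 0 (by rw [ev_ab, ev_bpow]; have := half_pow_pos (n+1); nlinarith)
lemma ne_ba_one (n : ℕ) : bsb 2 ^ (n+1) * bsa 2 ≠ 1 :=
  ne_of_ev 0 (by rw [ev_ba, ev_one]; have := half_pow_pos (n+1); nlinarith)
lemma ne_ba_a (n : ℕ) : bsb 2 ^ (n+1) * bsa 2 ≠ bsa 2 :=
  ne_of_ev 0 (by rw [ev_ba, ev_a]; have := half_pow_lt_one n; nlinarith)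
lemma ne_ba_a2 (n : ℕ) : bsb 2 ^ (n+1) * bsa 2 ≠ bsa 2 ^ 2 :=
  ne_of_ev 0 (by rw [ev_ba, ev_a2]; have := half_pow_lt_one n; nlinarith)
lemma ne_ba_b (n m : ℕ) : bsb 2 ^ (n+1) * bsa 2 ≠ bsb 2 ^ (m+1) :=
  ne_of_ev 0 (by rw [ev_ba, ev_bpow]; have := half_pow_pos (n+1); nlinarith)
lemma ne_ba_ab (n m : ℕ) : bsb 2 ^ (n+1) * bsa 2 ≠ bsa 2 * bsb 2 ^ (m+1) :=
  ne_of_ev 0 (by rw [ev_ba, ev_ab]; have := half_pow_lt_one n; have := half_pow_pos (m+1); nlinarith)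

lemma b_inj : Function.Injective (fun n : ℕ => bsb 2 ^ (n+1)) := by
  intro m n h
  dsimp only at h
  have : φ (bsb 2 ^ (m+1)) 1 = φ (bsb 2 ^ (n+1)) 1 := by rw [h]
  rw [ev_bpow, ev_bpow] at this
  simpa using half_pow_inj (by simpa using this : (1/2:ℚ)^(m+1) = (1/2:ℚ)^(n+1))
lemma ab_inj : Function.Injective (fun n : ℕ => bsa 2 * bsb 2 ^ (n+1)) := by
  intro m n h
  dsimp only at h
  exact b_inj (mul_left_cancel (h : bsa 2 * bsb 2 ^ (m+1) = bsa 2 * bsb 2 ^ (n+1)))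
lemma ba_inj : Function.Injective (fun n : ℕ => bsb 2 ^ (n+1) * bsa 2) := by
  intro m n h
  dsimp only at h
  exact b_inj (mul_right_cancel (h : bsb 2 ^ (m+1) * bsa 2 = bsb 2 ^ (n+1) * bsa 2))

noncomputable def T1 : Finset (BS 2) := {1, bsa 2, bsa 2 ^ 2}
noncomputable def T2 (t : ℕ) : Finset (BS 2) :=
  (Finset.range (2*t)).image (fun n => bsb 2 ^ (n+1))
noncomputable def T3 (t : ℕ) : Finset (BS 2) :=
  (Finset.range t).image (fun i => bsa 2 * bsb 2 ^ (i+1))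
noncomputable def T4 (t : ℕ) : Finset (BS 2) :=
  (Finset.range t).image (fun i => bsb 2 ^ (i+1) * bsa 2)
noncomputable def TT (t : ℕ) : Finset (BS 2) := T1 ∪ T2 t ∪ T3 t ∪ T4 t

lemma d12 (t : ℕ) : Disjoint T1 (T2 t) := by
  rw [Finset.disjoint_left]
  intro x hx hx2
  simp only [T1, T2, Finset.mem_insert, Finset.mem_singleton, Finset.mem_image,
    Finset.mem_range] at hx hx2
  obtain ⟨n, -, rfl⟩ := hx2
  rcases hx with h | h | h
  · exact ne_b_one n h
  · exact ne_b_a n h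
  · exact ne_b_a2 n h

lemma d123 (t : ℕ) : Disjoint (T1 ∪ T2 t) (T3 t) := by
  rw [Finset.disjoint_left]
  intro x hx hx3
  simp only [T1, T2, T3, Finset.mem_union, Finset.mem_insert, Finset.mem_singleton,
    Finset.mem_image, Finset.mem_range] at hx hx3
  obtain ⟨n, -, rfl⟩ := hx3
  rcases hx with (h | h | h) | ⟨m, -, h⟩
  · exact ne_ab_one n h
  · exact ne_ab_a n h
  · exact ne_ab_a2 n h
  · exact ne_ab_b n m h.symm

lemma d1234 (t : ℕ) : Disjoint (T1 ∪ T2 t ∪ T3 t) (T4 t) := by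
  rw [Finset.disjoint_left]
  intro x hx hx4
  simp only [T1, T2, T3, T4, Finset.mem_union, Finset.mem_insert, Finset.mem_singleton,
    Finset.mem_image, Finset.mem_range] at hx hx4
  obtain ⟨n, -, rfl⟩ := hx4
  rcases hx with ((h | h | h) | ⟨m, -, h⟩) | ⟨m, -, h⟩
  · exact ne_ba_one n h
  · exact ne_ba_a n h
  · exact ne_ba_a2 n h
  · exact ne_ba_b n m h.symm
  · exact ne_ba_ab n m h.symm

lemma card_TT (t : ℕ) : (TT t).card = 4 * t + 3 := by
  rw [TT, Finset.card_union_of_disjoint (d1234 t), Finset.card_union_of_disjoint (d123 t),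
    Finset.card_union_of_disjoint (d12 t)]
  rw [T1, T2, T3, T4, Finset.card_image_of_injective _ b_inj,
    Finset.card_image_of_injective _ ab_inj, Finset.card_image_of_injective _ ba_inj,
    Finset.card_range, Finset.card_range]
  rw [Finset.card_insert_of_notMem (by simp [ne_one_a, ne_one_a2]),
    Finset.card_insert_of_notMem (by simp [ne_a_a2]), Finset.card_singleton]
  ring

lemma prod_eq (t : ℕ) (ht : 2 ≤ t) :
    ({1, bsa 2} ∪ (Finset.range t).image (fun i => bsb 2 ^ (i + 1))) *
    ({1, bsa 2} ∪ (Finset.range t).image (fun i => bsb 2 ^ (i + 1))) = TT t := by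
  set SS : Finset (BS 2) :=
    {1, bsa 2} ∪ (Finset.range t).image (fun i => bsb 2 ^ (i + 1)) with hSS
  have hone : (1 : BS 2) ∈ SS := by simp [hSS]
  have ha : bsa 2 ∈ SS := by simp [hSS]
  have hb : ∀ n < t, bsb 2 ^ (n+1) ∈ SS := by
    intro n hn
    simp only [hSS, Finset.mem_union, Finset.mem_image, Finset.mem_range]
    exact Or.inr ⟨n, hn, rfl⟩
  apply Finset.Subset.antisymm
  · rw [Finset.mul_subset_iff]
    intro x hx y hy
    simp only [hSS, Finset.mem_union, Finset.mem_insert, Finset.mem_singleton, Finset.mem_image,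
      Finset.mem_range] at hx hy
    have mem1 : (1 : BS 2) ∈ TT t := by simp [TT, T1]
    have mema : bsa 2 ∈ TT t := by simp [TT, T1]
    have mema2 : bsa 2 ^ 2 ∈ TT t := by simp [TT, T1]
    have memb : ∀ n < 2*t, bsb 2 ^ (n+1) ∈ TT t := by
      intro n hn
      simp only [TT, T2, Finset.mem_union, Finset.mem_image, Finset.mem_range]
      exact Or.inl (Or.inl (Or.inr ⟨n, hn, rfl⟩))
    have memab : ∀ n < t, bsa 2 * bsb 2 ^ (n+1) ∈ TT t := by
      intro n hn
      simp only [TT, T3, Finset.mem_union, Finset.mem_image, Finset.mem_range]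
      exact Or.inl (Or.inr ⟨n, hn, rfl⟩)
    have memba : ∀ n < t, bsb 2 ^ (n+1) * bsa 2 ∈ TT t := by
      intro n hn
      simp only [TT, T4, Finset.mem_union, Finset.mem_image, Finset.mem_range]
      exact Or.inr ⟨n, hn, rfl⟩
    rcases hx with (rfl | rfl) | ⟨i, hi, rfl⟩ <;> rcases hy with (rfl | rfl) | ⟨j, hj, rfl⟩
    · rw [one_mul]; exact mem1
    · rw [one_mul]; exact mema
    · rw [one_mul]; exact memb j (by omega)
    · rw [mul_one]; exact mema
    · rw [← pow_two]; exact mema2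
    · exact memab j (by omega)
    · rw [mul_one]; exact memb i (by omega)
    · exact memba i (by omega)
    · rw [← pow_add, show (i+1) + (j+1) = (i+j+1)+1 by omega]
      exact memb (i+j+1) (by omega)
  · intro x hx
    simp only [TT, T1, T2, T3, T4, Finset.mem_union, Finset.mem_insert, Finset.mem_singleton,
      Finset.mem_image, Finset.mem_range] at hx
    rcases hx with (((rfl | rfl | rfl) | ⟨n, hn, rfl⟩) | ⟨n, hn, rfl⟩) | ⟨n, hn, rfl⟩
    · simpa using Finset.mul_mem_mul hone hone
    · simpa using Finset.mul_mem_mul hone ha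
    · simpa [pow_two] using Finset.mul_mem_mul ha ha
    · by_cases h : n < t
      · simpa using Finset.mul_mem_mul hone (hb n h)
      · have key : bsb 2 ^ (n+1) = bsb 2 ^ ((t-1)+1) * bsb 2 ^ ((n-t)+1) := by
          rw [← pow_add, show (t-1+1) + (n-t+1) = n+1 by omega]
        rw [key]
        exact Finset.mul_mem_mul (hb (t-1) (by omega)) (hb (n-t) (by omega))
    · exact Finset.mul_mem_mul ha (hb n hn)
    · exact Finset.mul_mem_mul (hb n hn) ha

theorem stmt15 (t : ℕ) (ht : 2 ≤ t) (k : ℕ) (hk : k = t + 2) (S : Finset (BS 2))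
    (hS : S = {1, bsa 2} ∪ (Finset.range t).image (fun i => bsb 2 ^ (i + 1))) :
    ((S * S).card : ℤ) = 4 * k - 5 := by
  subst hS hk
  rw [prod_eq t ht, card_TT]
  push_cast
  ring
end
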